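/- Let α be a real constant with α(α−3)(2α−3) ≠ 0 and set m := (2α³−9α²+9α)^{1/3} (real cube root). For f(x,u,p,q) = α·q²/p on the open set {(x,u,p,q) : p ≠ 0, q ≠ 0}, the invariants evaluate to I₁ = −2αq/p, I₂ = −α(2α−3)q²/(9p²), I₃ = (2α³−9α²+9α)q³/(27p³) ≠ 0, J₃ = mq/(3p), I₄ = m/(3p), I₅ = (α−3)/m, I₇ = 0, Q = 0; all the relative invariants I₆, I₈, I₁₀, I₁₁, I₁₂ vanish identically, K is the constant (3α²−9α+9)/m², and hence K_x = K_u = K_p = K_q = 0. -/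

import Mathlib

/-!
Invariants of the third-order ODE `u''' = f(x, u, u', u'')` under contact
transformations, following Cartan's equivalence method.
We write `p = u'`, `q = u''`.
-/

noncomputable section

/-- The real cube root of a real number. -/
def cbrt (y : ℝ) : ℝ := if 0 ≤ y then y ^ ((1 : ℝ)/3) else -((-y) ^ ((1 : ℝ)/3))

/-- Functions of `(x, u, p, q)`. -/
abbrev Fn : Type := ℝ → ℝ → ℝ → ℝ → ℝ

/-- Functions of `(x, u, p)`. -/
abbrev Fn3 : Type := ℝ → ℝ → ℝ → ℝ

/-- Partial derivative in `x` of a function of `(x,u,p,q)`. -/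
def pdx (g : Fn) : Fn := fun x u p q => deriv (fun t => g t u p q) x
/-- Partial derivative in `u` of a function of `(x,u,p,q)`. -/
def pdu (g : Fn) : Fn := fun x u p q => deriv (fun t => g x t p q) u
/-- Partial derivative in `p` of a function of `(x,u,p,q)`. -/
def pdp (g : Fn) : Fn := fun x u p q => deriv (fun t => g x u t q) p
/-- Partial derivative in `q` of a function of `(x,u,p,q)`. -/
def pdq (g : Fn) : Fn := fun x u p q => deriv (fun t => g x u p t) q

/-- Partial derivative in `x` of a function of `(x,u,p)`. -/
def pdx3 (g : Fn3) : Fn3 := fun x u p => deriv (fun t => g t u p) x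
/-- Partial derivative in `u` of a function of `(x,u,p)`. -/
def pdu3 (g : Fn3) : Fn3 := fun x u p => deriv (fun t => g x t p) u
/-- Partial derivative in `p` of a function of `(x,u,p)`. -/
def pdp3 (g : Fn3) : Fn3 := fun x u p => deriv (fun t => g x u t) p

/-- Lift of a function of `(x,u,p)` to a function of `(x,u,p,q)`, constant in `q`. -/
def lift (g : Fn3) : Fn := fun x u p _ => g x u p

/-- The total derivative operator `D̂ₓ = ∂ₓ + p ∂ᵤ + q ∂ₚ + f ∂_q` of the ODE `u''' = f`. -/
def Dhat (f g : Fn) : Fn := fun x u p q =>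
  pdx g x u p q + p * pdu g x u p q + q * pdp g x u p q + f x u p q * pdq g x u p q

/-- `I₁ = −f_q`. -/
def I1 (f : Fn) : Fn := fun x u p q => -(pdq f x u p q)

/-- `I₂ = −(2/9)I₁² − f_p − (1/3)D̂ₓI₁`. -/
def I2 (f : Fn) : Fn := fun x u p q =>
  -(2/9) * (I1 f x u p q)^2 - pdp f x u p q - (1/3) * Dhat f (I1 f) x u p q

/-- `I₃ = −(1/3)I₁I₂ − f_u − (1/2)D̂ₓI₂`. -/
def I3 (f : Fn) : Fn := fun x u p q =>
  -(1/3) * I1 f x u p q * I2 f x u p q - pdu f x u p q - (1/2) * Dhat f (I2 f) x u p q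

/-- `J₃`, the real cube root of `I₃`. -/
def J3 (f : Fn) : Fn := fun x u p q => cbrt (I3 f x u p q)

/-- `I₄ = (J₃)_q`. -/
def I4 (f : Fn) : Fn := pdq (J3 f)

/-- `I₅ = (1/(3J₃²))(I₁J₃ + 3D̂ₓJ₃)`. -/
def I5 (f : Fn) : Fn := fun x u p q =>
  (1 / (3 * (J3 f x u p q)^2)) * (I1 f x u p q * J3 f x u p q + 3 * Dhat f (J3 f) x u p q)

/-- `I₇ = −(I₅)_q J₃²`. -/
def I7 (f : Fn) : Fn := fun x u p q => -(pdq (I5 f) x u p q) * (J3 f x u p q)^2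

/-- `I₉ = 2J₃D̂ₓI₅ − I₂ + J₃²I₅²`. -/
def I9 (f : Fn) : Fn := fun x u p q =>
  2 * J3 f x u p q * Dhat f (I5 f) x u p q - I2 f x u p q
    + (J3 f x u p q)^2 * (I5 f x u p q)^2

/-- `K = I₉/J₃²`. -/
def Kinv (f : Fn) : Fn := fun x u p q => I9 f x u p q / (J3 f x u p q)^2

/-- `Q = −(I₁I₇ + 3J₃²(I₅)_p + 3(J₃)_u − 3J₃I₄D̂ₓI₅)/(3J₃)`. -/
def Qinv (f : Fn) : Fn := fun x u p q =>
  -(I1 f x u p q * I7 f x u p q + 3 * (J3 f x u p q)^2 * pdp (I5 f) x u p q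
      + 3 * pdu (J3 f) x u p q
      - 3 * J3 f x u p q * I4 f x u p q * Dhat f (I5 f) x u p q)
    / (3 * J3 f x u p q)

/-- `I₆ = (2/3)(J₃)_q I₁ − (1/3)(I₁)_q J₃ − 2(J₃)_p + 2J₃I₄I₅`. -/
def I6 (f : Fn) : Fn := fun x u p q =>
  (2/3) * pdq (J3 f) x u p q * I1 f x u p q - (1/3) * pdq (I1 f) x u p q * J3 f x u p q
    - 2 * pdp (J3 f) x u p q + 2 * J3 f x u p q * I4 f x u p q * I5 f x u p q

/-- `I₈ = (I₄)_q`. -/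
def I8 (f : Fn) : Fn := pdq (I4 f)

/-- `I₁₀ = I₄D̂ₓI₇ − J₃(I₇)_p + J₃²(I₄/J₃)_u`. -/
def I10 (f : Fn) : Fn := fun x u p q =>
  I4 f x u p q * Dhat f (I7 f) x u p q - J3 f x u p q * pdp (I7 f) x u p q
    + (J3 f x u p q)^2 *
      pdu (fun x' u' p' q' => I4 f x' u' p' q' / J3 f x' u' p' q') x u p q

/-- `I₁₁ = (J₃)_u − D̂ₓI₇`. -/
def I11 (f : Fn) : Fn := fun x u p q =>
  pdu (J3 f) x u p q - Dhat f (I7 f) x u p q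

/-- `I₁₂`. -/
def I12 (f : Fn) : Fn := fun x u p q =>
  6 * I1 f x u p q * J3 f x u p q *
      (I5 f x u p q * I7 f x u p q - I4 f x u p q * Dhat f (I5 f) x u p q)
    - 18 * (J3 f x u p q)^3 * I4 f x u p q
    + 6 * pdp (I5 f) x u p q * I1 f x u p q * (J3 f x u p q)^2
    - 18 * I2 f x u p q * J3 f x u p q * I4 f x u p q * I5 f x u p q
    - 18 * J3 f x u p q * I7 f x u p q * Dhat f (I5 f) x u p q
    + 18 * (J3 f x u p q)^2 * pdu (I5 f) x u p q
    + 18 * I2 f x u p q * Dhat f (I4 f) x u p q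
    + 2 * (I1 f x u p q)^2 * I7 f x u p q
    - 9 * pdp (I2 f) x u p q * J3 f x u p q
    + 6 * (J3 f x u p q)^2 *
        pdu (fun x' u' p' q' => I1 f x' u' p' q' / J3 f x' u' p' q') x u p q
    + 36 * I2 f x u p q * I7 f x u p q

/-- `I₁₃ = (J₃I₄I₅ − I₇)D̂ₓK + J₃K_u − J₃²I₅K_p`. -/
def I13 (f : Fn) : Fn := fun x u p q =>
  (J3 f x u p q * I4 f x u p q * I5 f x u p q - I7 f x u p q) * Dhat f (Kinv f) x u p q
    + J3 f x u p q * pdu (Kinv f) x u p q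
    - (J3 f x u p q)^2 * I5 f x u p q * pdp (Kinv f) x u p q

/-- `I₁₄ = K_q`. -/
def I14 (f : Fn) : Fn := pdq (Kinv f)

/-- `I₁₅ = I₄D̂ₓK − J₃K_p`. -/
def I15 (f : Fn) : Fn := fun x u p q =>
  I4 f x u p q * Dhat f (Kinv f) x u p q - J3 f x u p q * pdp (Kinv f) x u p q


/-! ### Auxiliary lemmas -/

lemma cbrt_spec (y : ℝ) : (cbrt y)^3 = y := by
  unfold cbrt; split_ifs with h
  · rw [← Real.rpow_natCast (y ^ ((1:ℝ)/3)) 3, ← Real.rpow_mul h]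
    norm_num
  · push_neg at h
    have h' : (0:ℝ) ≤ -y := by linarith
    have h2 : ((-y) ^ ((1:ℝ)/3))^(3:ℕ) = -y := by
      rw [← Real.rpow_natCast ((-y) ^ ((1:ℝ)/3)) 3, ← Real.rpow_mul h']
      norm_num
    nlinarith [h2]

lemma cbrt_cube (z : ℝ) : cbrt (z^3) = z :=
  (Odd.strictMono_pow (R := ℝ) (⟨1, by norm_num⟩)).injective (cbrt_spec (z^3))

lemma deriv_ev_const {g : ℝ → ℝ} {t c : ℝ} (h : ∀ᶠ s in nhds t, g s = c) : deriv g t = 0 := by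
  have h2 : g =ᶠ[nhds t] (fun _ => c) := h
  rw [h2.deriv_eq]; simp

lemma dP (C : ℝ) (a b : ℤ) (p q : ℝ) :
    deriv (fun t : ℝ => C * t ^ a * q ^ b) p = C * (a * p ^ (a-1)) * q ^ b := by
  rw [deriv_mul_const_field, deriv_const_mul_field, deriv_zpow]

lemma dQ (C : ℝ) (a b : ℤ) (p q : ℝ) :
    deriv (fun t : ℝ => C * p ^ a * t ^ b) q = C * p ^ a * (b * q ^ (b-1)) := by
  rw [deriv_const_mul_field, deriv_zpow]


set_option maxHeartbeats 1000000 in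
/-- For `f(x,u,p,q) = α·q²/p` on `{p ≠ 0, q ≠ 0}`, with
`α(α−3)(2α−3) ≠ 0` and `m` the real cube root of `2α³−9α²+9α`, the invariants evaluate
as listed, all the relative invariants `I₆, I₈, I₁₀, I₁₁, I₁₂` vanish identically, `K` is
the constant `(3α²−9α+9)/m²`, and `K_x = K_u = K_p = K_q = 0`. -/
theorem invariants_of_example1 (α m : ℝ)
    (hα : α * (α - 3) * (2*α - 3) ≠ 0)
    (hm : m = cbrt (2*α^3 - 9*α^2 + 9*α))
    (f : Fn) (hfdef : f = fun _ _ p q => α * q^2 / p) :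
    ∀ x u p q : ℝ, p ≠ 0 → q ≠ 0 →
      I1 f x u p q = -(2*α*q) / p ∧
      I2 f x u p q = -(α * (2*α - 3) * q^2) / (9 * p^2) ∧
      I3 f x u p q = (2*α^3 - 9*α^2 + 9*α) * q^3 / (27 * p^3) ∧
      I3 f x u p q ≠ 0 ∧
      J3 f x u p q = m * q / (3 * p) ∧
      I4 f x u p q = m / (3 * p) ∧
      I5 f x u p q = (α - 3) / m ∧
      I7 f x u p q = 0 ∧
      Qinv f x u p q = 0 ∧
      I6 f x u p q = 0 ∧
      I8 f x u p q = 0 ∧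
      I10 f x u p q = 0 ∧
      I11 f x u p q = 0 ∧
      I12 f x u p q = 0 ∧
      Kinv f x u p q = (3*α^2 - 9*α + 9) / m^2 ∧
      pdx (Kinv f) x u p q = 0 ∧
      pdu (Kinv f) x u p q = 0 ∧
      pdp (Kinv f) x u p q = 0 ∧
      pdq (Kinv f) x u p q = 0 := by
  -- canonical form of f
  have hF : f = (fun _ _ p q => α * p ^ (-1:ℤ) * q ^ (2:ℤ) : Fn) := by
    rw [hfdef]; funext a b c d
    simp only [zpow_neg, zpow_one, zpow_ofNat]; ring
  have hc : m ^ 3 = 2*α^3 - 9*α^2 + 9*α := by rw [hm]; exact cbrt_spec _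
  have hcne : 2*α^3 - 9*α^2 + 9*α ≠ 0 := by
    intro h; exact hα (by rw [show α*(α-3)*(2*α-3) = 2*α^3-9*α^2+9*α from by ring, h])
  have hm0 : m ≠ 0 := by
    intro h; rw [h] at hc; exact hcne (by rw [← hc]; ring)
  -- global closed forms
  have h1 : I1 f = (fun _ _ p q => (-2*α) * p ^ (-1:ℤ) * q ^ (1:ℤ) : Fn) := by
    funext a b c d
    simp only [I1, pdq]
    simp only [hF]
    simp only [dQ]
    norm_num
    try ring
  have h2 : I2 f = (fun _ _ p q => (-(α*(2*α-3))/9) * p ^ (-2:ℤ) * q ^ (2:ℤ) : Fn) := by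
    funext a b c d
    simp only [I2, Dhat, pdx, pdu, pdp, pdq, h1]
    simp only [hF]
    simp only [dP, dQ, deriv_const']
    norm_num [zpow_neg, zpow_one, zpow_zero, zpow_ofNat]
    try ring
  have h3 : I3 f = (fun _ _ p q => ((2*α^3-9*α^2+9*α)/27) * p ^ (-3:ℤ) * q ^ (3:ℤ) : Fn) := by
    funext a b c d
    simp only [I3, Dhat, pdx, pdu, pdp, pdq, h1, h2]
    simp only [hF]
    simp only [dP, dQ, deriv_const']
    norm_num [zpow_neg, zpow_one, zpow_zero, zpow_ofNat]
    try ring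
  have hJ : J3 f = (fun _ _ p q => (m/3) * p ^ (-1:ℤ) * q ^ (1:ℤ) : Fn) := by
    funext a b c d
    simp only [J3, h3]
    rw [show (2*α^3-9*α^2+9*α)/27 * c ^ (-3:ℤ) * d ^ (3:ℤ)
        = ((m/3) * c ^ (-1:ℤ) * d ^ (1:ℤ))^3 by
      rw [← hc]; simp only [zpow_neg, zpow_one, zpow_ofNat]; ring]
    exact cbrt_cube _
  have h4 : I4 f = (fun _ _ p q => (m/3) * p ^ (-1:ℤ) * q ^ (0:ℤ) : Fn) := by
    funext a b c d
    simp only [I4, pdq, hJ]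
    simp only [dQ]
    norm_num
    try ring
  have hDJ : Dhat f (J3 f) = (fun _ _ p q => ((m/3)*(α-1)) * p ^ (-2:ℤ) * q ^ (2:ℤ) : Fn) := by
    funext a b c d
    simp only [Dhat, pdx, pdu, pdp, pdq, hJ]
    simp only [hF]
    simp only [dP, dQ, deriv_const']
    norm_num [zpow_neg, zpow_one, zpow_zero, zpow_ofNat]
    try ring
  -- pointwise value of I5 on the domain
  have hI5v : ∀ x u p q : ℝ, p ≠ 0 → q ≠ 0 → I5 f x u p q = (α - 3)/m := by
    intro a b c d hcne0 hdne0
    simp only [I5, hDJ]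
    simp only [h1, hJ]
    simp only [zpow_neg, zpow_one, zpow_ofNat]
    field_simp
    ring
  -- derivatives of I5 vanish on the domain
  have h5x : ∀ x u p q : ℝ, p ≠ 0 → q ≠ 0 → pdx (I5 f) x u p q = 0 := by
    intro a b c d hc0 hd0
    simp only [pdx]
    rw [show (fun t => I5 f t b c d) = (fun _ => (α-3)/m) from
      funext fun t => hI5v t b c d hc0 hd0]
    simp
  have h5u : ∀ x u p q : ℝ, p ≠ 0 → q ≠ 0 → pdu (I5 f) x u p q = 0 := by
    intro a b c d hc0 hd0
    simp only [pdu]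
    rw [show (fun t => I5 f a t c d) = (fun _ => (α-3)/m) from
      funext fun t => hI5v a t c d hc0 hd0]
    simp
  have h5p : ∀ x u p q : ℝ, p ≠ 0 → q ≠ 0 → pdp (I5 f) x u p q = 0 := by
    intro a b c d hc0 hd0
    simp only [pdp]
    refine deriv_ev_const (c := (α-3)/m) ?_
    filter_upwards [eventually_ne_nhds hc0] with s hs
    exact hI5v a b s d hs hd0
  have h5q : ∀ x u p q : ℝ, p ≠ 0 → q ≠ 0 → pdq (I5 f) x u p q = 0 := by
    intro a b c d hc0 hd0
    simp only [pdq]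
    refine deriv_ev_const (c := (α-3)/m) ?_
    filter_upwards [eventually_ne_nhds hd0] with s hs
    exact hI5v a b c s hc0 hs
  have hD5 : ∀ x u p q : ℝ, p ≠ 0 → q ≠ 0 → Dhat f (I5 f) x u p q = 0 := by
    intro a b c d hc0 hd0
    simp only [Dhat, h5x a b c d hc0 hd0, h5u a b c d hc0 hd0,
      h5p a b c d hc0 hd0, h5q a b c d hc0 hd0]
    ring
  -- I7 vanishes on the domain
  have hI7v : ∀ x u p q : ℝ, p ≠ 0 → q ≠ 0 → I7 f x u p q = 0 := by
    intro a b c d hc0 hd0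
    simp only [I7, h5q a b c d hc0 hd0]
    ring
  have h7x : ∀ x u p q : ℝ, p ≠ 0 → q ≠ 0 → pdx (I7 f) x u p q = 0 := by
    intro a b c d hc0 hd0
    simp only [pdx]
    rw [show (fun t => I7 f t b c d) = (fun _ => (0:ℝ)) from
      funext fun t => hI7v t b c d hc0 hd0]
    simp
  have h7u : ∀ x u p q : ℝ, p ≠ 0 → q ≠ 0 → pdu (I7 f) x u p q = 0 := by
    intro a b c d hc0 hd0
    simp only [pdu]
    rw [show (fun t => I7 f a t c d) = (fun _ => (0:ℝ)) from
      funext fun t => hI7v a t c d hc0 hd0]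
    simp
  have h7p : ∀ x u p q : ℝ, p ≠ 0 → q ≠ 0 → pdp (I7 f) x u p q = 0 := by
    intro a b c d hc0 hd0
    simp only [pdp]
    refine deriv_ev_const (c := (0:ℝ)) ?_
    filter_upwards [eventually_ne_nhds hc0] with s hs
    exact hI7v a b s d hs hd0
  have h7q : ∀ x u p q : ℝ, p ≠ 0 → q ≠ 0 → pdq (I7 f) x u p q = 0 := by
    intro a b c d hc0 hd0
    simp only [pdq]
    refine deriv_ev_const (c := (0:ℝ)) ?_
    filter_upwards [eventually_ne_nhds hd0] with s hs
    exact hI7v a b c s hc0 hs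
  have hD7 : ∀ x u p q : ℝ, p ≠ 0 → q ≠ 0 → Dhat f (I7 f) x u p q = 0 := by
    intro a b c d hc0 hd0
    simp only [Dhat, h7x a b c d hc0 hd0, h7u a b c d hc0 hd0,
      h7p a b c d hc0 hd0, h7q a b c d hc0 hd0]
    ring
  -- K is constant on the domain
  have hKv : ∀ x u p q : ℝ, p ≠ 0 → q ≠ 0 → Kinv f x u p q = (3*α^2 - 9*α + 9)/m^2 := by
    intro a b c d hc0 hd0
    simp only [Kinv, I9, hD5 a b c d hc0 hd0, h2, hJ, hI5v a b c d hc0 hd0]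
    simp only [zpow_neg, zpow_one, zpow_ofNat]
    field_simp
    ring
  -- main computation at a point of the domain
  intro x u p q hp hq
  have hI1 : I1 f x u p q = -(2*α*q) / p := by
    rw [h1]; simp only [zpow_neg, zpow_one, zpow_ofNat]; field_simp
  have hI2 : I2 f x u p q = -(α * (2*α - 3) * q^2) / (9 * p^2) := by
    rw [h2]; simp only [zpow_neg, zpow_one, zpow_ofNat]; field_simp; try ring
  have hI3 : I3 f x u p q = (2*α^3 - 9*α^2 + 9*α) * q^3 / (27 * p^3) := by
    rw [h3]; simp only [zpow_neg, zpow_one, zpow_ofNat]; field_simp; try ring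
  have hI3ne : I3 f x u p q ≠ 0 := by
    rw [hI3]
    exact div_ne_zero (mul_ne_zero hcne (pow_ne_zero 3 hq))
      (by positivity)
  have hJ3v : J3 f x u p q = m * q / (3 * p) := by
    rw [hJ]; simp only [zpow_neg, zpow_one, zpow_ofNat]; field_simp; try ring
  have hI4v : I4 f x u p q = m / (3 * p) := by
    rw [h4]; simp only [zpow_neg, zpow_one, zpow_zero, zpow_ofNat]; field_simp
  have hJu : pdu (J3 f) x u p q = 0 := by
    simp only [pdu, hJ, deriv_const']
  have hQv : Qinv f x u p q = 0 := by
    simp only [Qinv, hI7v x u p q hp hq, h5p x u p q hp hq, hJu,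
      hD5 x u p q hp hq]
    simp
  have hI6v : I6 f x u p q = 0 := by
    simp only [I6, pdq, pdp, h1, hJ, h4, hI5v x u p q hp hq, dP, dQ]
    norm_num [zpow_neg, zpow_one, zpow_zero, zpow_ofNat]
    field_simp
    try ring
  have hI8v : I8 f x u p q = 0 := by
    simp only [I8, pdq, h4, dQ]
    norm_num
  have hq14 : pdu (fun x' u' p' q' => I4 f x' u' p' q' / J3 f x' u' p' q') x u p q = 0 := by
    simp only [pdu, h4, hJ, deriv_const']
  have hq11 : pdu (fun x' u' p' q' => I1 f x' u' p' q' / J3 f x' u' p' q') x u p q = 0 := by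
    simp only [pdu, h1, hJ, deriv_const']
  have hI10v : I10 f x u p q = 0 := by
    simp only [I10, hD7 x u p q hp hq, h7p x u p q hp hq, hq14]
    ring
  have hI11v : I11 f x u p q = 0 := by
    simp only [I11, hJu, hD7 x u p q hp hq]
    ring
  have hD4 : Dhat f (I4 f) x u p q = (-(m/3)) * p ^ (-2:ℤ) * q ^ (1:ℤ) := by
    simp only [Dhat, pdx, pdu, pdp, pdq, h4]
    simp only [hF]
    simp only [dP, dQ, deriv_const']
    norm_num [zpow_neg, zpow_one, zpow_zero, zpow_ofNat]
    try ring
  have h2p : pdp (I2 f) x u p q = (2*(α*(2*α-3))/9) * p ^ (-3:ℤ) * q ^ (2:ℤ) := by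
    simp only [pdp, h2]
    simp only [dP]
    norm_num [zpow_neg, zpow_one, zpow_zero, zpow_ofNat]
    try ring
  have hI12v : I12 f x u p q = 0 := by
    simp only [I12, hI7v x u p q hp hq, hD5 x u p q hp hq, h5p x u p q hp hq,
      h5u x u p q hp hq, hq11, hD4, h2p]
    simp only [h1, h2, hJ, h4, hI5v x u p q hp hq]
    simp only [zpow_neg, zpow_one, zpow_zero, zpow_ofNat]
    field_simp
    linear_combination (-(162:ℝ)*q^3*m) * hc
  have hKvv : Kinv f x u p q = (3*α^2 - 9*α + 9) / m^2 := hKv x u p q hp hq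
  have hKx : pdx (Kinv f) x u p q = 0 := by
    simp only [pdx]
    rw [show (fun t => Kinv f t u p q) = (fun _ => (3*α^2 - 9*α + 9)/m^2) from
      funext fun t => hKv t u p q hp hq]
    simp
  have hKu : pdu (Kinv f) x u p q = 0 := by
    simp only [pdu]
    rw [show (fun t => Kinv f x t p q) = (fun _ => (3*α^2 - 9*α + 9)/m^2) from
      funext fun t => hKv x t p q hp hq]
    simp
  have hKp : pdp (Kinv f) x u p q = 0 := by
    simp only [pdp]
    refine deriv_ev_const (c := (3*α^2 - 9*α + 9)/m^2) ?_
    filter_upwards [eventually_ne_nhds hp] with s hs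
    exact hKv x u s q hs hq
  have hKq : pdq (Kinv f) x u p q = 0 := by
    simp only [pdq]
    refine deriv_ev_const (c := (3*α^2 - 9*α + 9)/m^2) ?_
    filter_upwards [eventually_ne_nhds hq] with s hs
    exact hKv x u p s hp hs
  exact ⟨hI1, hI2, hI3, hI3ne, hJ3v, hI4v, hI5v x u p q hp hq, hI7v x u p q hp hq,
    hQv, hI6v, hI8v, hI10v, hI11v, hI12v, hKvv, hKx, hKu, hKp, hKq⟩


end
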